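/- Invariance of a modified polytope via sensitivity: for each k ∈ K, suppose (t_k*, λ_k*) is a feasible point of the facet-k LP for P — i.e. λ_{k,i}* ≥ 0 for all i ∈ K∖{k} and t_k* ≤ q_k(v̄) + Σ_{i∈K} λ_{k,i}*(a_i'·v̄ − b_i) for all v̄ ∈ V̄', where q_k is the blossom of x ↦ −a_k·f(x). Let α ∈ ℝ^{m_K} be such that t_k* − λ_k*·α ≥ 0 for all k ∈ K, and such that the perturbed polytope P_α = {x ∈ ℝ^n : a_k·x ≤ b_k + α_k, ∀k ∈ K} satisfies P_α ⊆ R and has all its facets nonempty. Then P_α is an invariant set of ẋ = f(x): every differentiable curve x : [0,∞) → ℝ^n with x(0) ∈ P_α and x'(t) = f(x(t)) for all t ≥ 0 satisfies x(t) ∈ P_α for all t ≥ 0. -/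

import Mathlib

open Finset

/-- The normalized elementary symmetric polynomial
`B_{l,δ}(z) = binom(δ,l)⁻¹ ∑_{1≤σ₁<⋯<σ_l≤δ} z_{σ₁}⋯z_{σ_l}`. -/
noncomputable def normEsymm (δ l : ℕ) (z : Fin δ → ℝ) : ℝ :=
  ((δ.choose l : ℝ))⁻¹ * ∑ s ∈ Finset.powersetCard l (Finset.univ : Finset (Fin δ)),
    ∏ i ∈ s, z i

/-- The polynomial `p(x) = ∑_{l ∈ Δ} c_l x₁^{l₁}⋯x_n^{l_n}` with coefficients `c`,
where `Δ = {0,…,δ₁} × ⋯ × {0,…,δ_n}`. -/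
noncomputable def polyOf {n : ℕ} {δ : Fin n → ℕ} (c : (∀ k, Fin (δ k + 1)) → ℝ)
    (x : Fin n → ℝ) : ℝ :=
  ∑ l : ∀ k, Fin (δ k + 1), c l * ∏ k, x k ^ (l k : ℕ)

/-- The blossom `q(z) = ∑_{l ∈ Δ} c_l ∏_k B_{l_k,δ_k}(z_{k,1},…,z_{k,δ_k})` of the
polynomial with coefficients `c`. -/
noncomputable def blossomOf {n : ℕ} {δ : Fin n → ℕ} (c : (∀ k, Fin (δ k + 1)) → ℝ)
    (z : ∀ k, Fin (δ k) → ℝ) : ℝ :=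
  ∑ l : ∀ k, Fin (δ k + 1), c l * ∏ k, normEsymm (δ k) (l k) (z k)

/-- A function of the blocked variables `z = (z_{k,i})` is multi-affine if it is affine
(degree at most 1) in each single argument `z_{k,i}`. -/
def MultiAffineB {n : ℕ} (δ : Fin n → ℕ) (q : (∀ k, Fin (δ k) → ℝ) → ℝ) : Prop :=
  ∀ (k : Fin n) (i : Fin (δ k)) (z : ∀ k, Fin (δ k) → ℝ) (s t θ : ℝ),
    q (Function.update z k (Function.update (z k) i (θ * s + (1 - θ) * t)))
      = θ * q (Function.update z k (Function.update (z k) i s))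
        + (1 - θ) * q (Function.update z k (Function.update (z k) i t))

/-- `z ≅ z'` : each block of `z` is a permutation of the corresponding block of `z'`. -/
def BlockRel {n : ℕ} (δ : Fin n → ℕ) (z z' : ∀ k, Fin (δ k) → ℝ) : Prop :=
  ∀ k, ∃ π : Equiv.Perm (Fin (δ k)), ∀ i, z k i = z' k (π i)


/-- Euclidean dot product on `ℝ^n`. -/
def dotp {n : ℕ} (u x : Fin n → ℝ) : ℝ := ∑ k, u k * x k

/-- The lifted linear form: for `w ∈ ℝ^n`, `w' · z = ∑_k ∑_i (w k / δ k) * z k i`. -/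
noncomputable def aLift {n : ℕ} (δ : Fin n → ℕ) (w : Fin n → ℝ)
    (z : ∀ k, Fin (δ k) → ℝ) : ℝ :=
  ∑ k, ∑ i : Fin (δ k), (w k / (δ k : ℝ)) * z k i

/-- The canonical representative of the equivalence class of vertices of `R'` whose
`k`-th block has exactly `ℓ k` coordinates equal to `hi k`. -/
noncomputable def vrep {n : ℕ} (δ : Fin n → ℕ) (lo hi : Fin n → ℝ)
    (ℓ : ∀ k, Fin (δ k + 1)) (k : Fin n) (i : Fin (δ k)) : ℝ :=
  if (i : ℕ) < (ℓ k : ℕ) then hi k else lo k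

section Helpers

lemma card_filter_coe_lt {d m : ℕ} (h : m ≤ d) :
    ((Finset.univ : Finset (Fin d)).filter (fun j : Fin d => (j : ℕ) < m)).card = m := by
  classical
  have : (Finset.univ : Finset (Fin d)).filter (fun j : Fin d => (j : ℕ) < m)
      = Finset.map (Fin.castLEEmb h) Finset.univ := by
    ext j
    simp only [Finset.mem_filter, Finset.mem_univ, true_and, Finset.mem_map,
      Fin.coe_castLEEmb]
    constructor
    · intro hj; exact ⟨⟨j, hj⟩, rfl⟩
    · rintro ⟨i, rfl⟩; simpa using i.2
  rw [this, Finset.card_map, Finset.card_univ, Fintype.card_fin]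

lemma exists_perm_iff_mem {d : ℕ} (s t : Finset (Fin d)) (h : s.card = t.card) :
    ∃ π : Equiv.Perm (Fin d), ∀ i, i ∈ s ↔ π i ∈ t := by
  classical
  have hc : sᶜ.card = tᶜ.card := by simp [Finset.card_compl, h]
  let e1 : {x // x ∈ s} ≃ {x // x ∈ t} := Finset.equivOfCardEq h
  let e2 : {x // x ∈ sᶜ} ≃ {x // x ∈ tᶜ} := Finset.equivOfCardEq hc
  let e2' : {x // ¬ x ∈ s} ≃ {x // ¬ x ∈ t} :=
    (Equiv.subtypeEquivRight (fun x => by simp)).trans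
      (e2.trans (Equiv.subtypeEquivRight (fun x => by simp)))
  refine ⟨Equiv.subtypeCongr e1 e2', fun i => ?_⟩
  by_cases hi : i ∈ s
  · have : Equiv.subtypeCongr e1 e2' i = (e1 ⟨i, hi⟩ : Fin d) := by
      simp [Equiv.subtypeCongr, Equiv.sumCompl_symm_apply_of_pos hi]
    rw [this]
    exact ⟨fun _ => (e1 ⟨i, hi⟩).2, fun _ => hi⟩
  · have : Equiv.subtypeCongr e1 e2' i = (e2' ⟨i, hi⟩ : Fin d) := by
      simp [Equiv.subtypeCongr, Equiv.sumCompl_symm_apply_of_neg hi]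
    rw [this]
    exact ⟨fun h' => absurd h' hi, fun h' => absurd h' (e2' ⟨i, hi⟩).2⟩

lemma aLift_update {n : ℕ} {δ : Fin n → ℕ} (w : Fin n → ℝ) (z : ∀ k, Fin (δ k) → ℝ)
    (k : Fin n) (i : Fin (δ k)) (c : ℝ) :
    aLift δ w (Function.update z k (Function.update (z k) i c))
      = aLift δ w z + (w k / (δ k : ℝ)) * (c - z k i) := by
  classical
  unfold aLift
  rw [Finset.sum_eq_sum_sdiff_singleton_add (Finset.mem_univ k),
    Finset.sum_eq_sum_sdiff_singleton_add (Finset.mem_univ k)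
      (fun k' => ∑ i' : Fin (δ k'), (w k' / (δ k' : ℝ)) * z k' i')]
  have h1 : ∀ k' ∈ Finset.univ \ {k},
      (∑ i' : Fin (δ k'), (w k' / (δ k' : ℝ)) * (Function.update z k
        (Function.update (z k) i c) k') i')
      = ∑ i' : Fin (δ k'), (w k' / (δ k' : ℝ)) * z k' i' := by
    intro k' hk'
    have : k' ≠ k := by simpa using (Finset.mem_sdiff.mp hk').2
    rw [Function.update_of_ne this]
  rw [Finset.sum_congr rfl h1, Function.update_self]
  have h2 : (∑ i' : Fin (δ k), (w k / (δ k : ℝ)) * (Function.update (z k) i c) i')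
      = (∑ i' : Fin (δ k), (w k / (δ k : ℝ)) * z k i') + (w k / (δ k : ℝ)) * (c - z k i) := by
    rw [Finset.sum_eq_sum_sdiff_singleton_add (Finset.mem_univ i),
      Finset.sum_eq_sum_sdiff_singleton_add (Finset.mem_univ i)
        (fun i' => (w k / (δ k : ℝ)) * z k i')]
    have h3 : ∀ i' ∈ Finset.univ \ {i},
        (w k / (δ k : ℝ)) * (Function.update (z k) i c) i' = (w k / (δ k : ℝ)) * z k i' := by
      intro i' hi'
      have : i' ≠ i := by simpa using (Finset.mem_sdiff.mp hi').2
      rw [Function.update_of_ne this]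
    rw [Finset.sum_congr rfl h3, Function.update_self]
    ring
  rw [h2]; ring

lemma multiAffine_ge_on_box {n : ℕ} {δ : Fin n → ℕ} {lo hi : Fin n → ℝ}
    (hlt : ∀ j, lo j < hi j) {Q : (∀ k, Fin (δ k) → ℝ) → ℝ} (hQ : MultiAffineB δ Q)
    {c : ℝ}
    (hvert : ∀ z : ∀ k, Fin (δ k) → ℝ, (∀ k i, z k i = lo k ∨ z k i = hi k) → c ≤ Q z) :
    ∀ z, (∀ k i, z k i ∈ Set.Icc (lo k) (hi k)) → c ≤ Q z := by
  classical
  suffices H : ∀ (N : ℕ) (z : ∀ k, Fin (δ k) → ℝ),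
      ((Finset.univ : Finset ((k : Fin n) × Fin (δ k))).filter
        (fun p => z p.1 p.2 ≠ lo p.1 ∧ z p.1 p.2 ≠ hi p.1)).card ≤ N →
      (∀ k i, z k i ∈ Set.Icc (lo k) (hi k)) → c ≤ Q z by
    exact fun z hz => H _ z le_rfl hz
  intro N
  induction N with
  | zero =>
    intro z hcard hz
    apply hvert
    intro k i
    by_contra hne
    push_neg at hne
    have : (⟨k, i⟩ : (k : Fin n) × Fin (δ k)) ∈ (Finset.univ.filter
        (fun p : (k : Fin n) × Fin (δ k) => z p.1 p.2 ≠ lo p.1 ∧ z p.1 p.2 ≠ hi p.1)) := by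
      simp [hne.1, hne.2]
    have := Finset.card_pos.mpr ⟨_, this⟩
    omega
  | succ N ih =>
    intro z hcard hz
    by_cases hN : ((Finset.univ : Finset ((k : Fin n) × Fin (δ k))).filter
        (fun p => z p.1 p.2 ≠ lo p.1 ∧ z p.1 p.2 ≠ hi p.1)).card = 0
    · exact ih z (by omega) hz
    · obtain ⟨p, hp⟩ := Finset.card_pos.mp (Nat.pos_of_ne_zero hN)
      obtain ⟨k, i⟩ := p
      simp only [Finset.mem_filter, Finset.mem_univ, true_and] at hp
      set θ : ℝ := (z k i - lo k) / (hi k - lo k) with hθdef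
      have hne : hi k - lo k ≠ 0 := by have := hlt k; linarith
      have hcomb : z k i = θ * hi k + (1 - θ) * lo k := by
        rw [hθdef]; field_simp; ring
      have hθ0 : 0 ≤ θ := by
        apply div_nonneg
        · have := (hz k i).1; linarith
        · have := hlt k; linarith
      have hθ1 : 1 - θ ≥ 0 := by
        have h1 : θ ≤ 1 := by
          rw [hθdef, div_le_one (by have := hlt k; linarith)]
          have := (hz k i).2; linarith
        linarith
      have hself : z = Function.update z k (Function.update (z k) i (z k i)) := by
        rw [Function.update_eq_self, Function.update_eq_self]
      have hkey := hQ k i z (hi k) (lo k) θ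
      have hupd : ∀ v : ℝ, (v = lo k ∨ v = hi k) →
          c ≤ Q (Function.update z k (Function.update (z k) i v)) := by
        intro v hv
        set z' := Function.update z k (Function.update (z k) i v) with hz'
        have hzval : ∀ (k' : Fin n) (i' : Fin (δ k')),
            (¬ (∃ h : k' = k, h ▸ i' = i)) → z' k' i' = z k' i' := by
          intro k' i' hne'
          by_cases h1 : k' = k
          · subst h1
            have h2 : i' ≠ i := fun h => hne' ⟨rfl, h⟩
            rw [hz', Function.update_self, Function.update_of_ne h2]
          · rw [hz', Function.update_of_ne h1]
        have hsub : (Finset.univ.filter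
            (fun p : (k : Fin n) × Fin (δ k) => z' p.1 p.2 ≠ lo p.1 ∧ z' p.1 p.2 ≠ hi p.1))
            ⊆ (Finset.univ.filter
            (fun p : (k : Fin n) × Fin (δ k) => z p.1 p.2 ≠ lo p.1 ∧ z p.1 p.2 ≠ hi p.1)).erase
              ⟨k, i⟩ := by
          intro p hp'
          simp only [Finset.mem_filter, Finset.mem_univ, true_and] at hp'
          rw [Finset.mem_erase]
          constructor
          · intro hpe
            rw [hpe] at hp'
            have : z' k i = v := by rw [hz', Function.update_self, Function.update_self]
            rw [this] at hp'
            rcases hv with h | h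
            · exact hp'.1 h
            · exact hp'.2 h
          · simp only [Finset.mem_filter, Finset.mem_univ, true_and]
            rcases Classical.em (∃ h : p.1 = k, h ▸ p.2 = i) with he | he
            · exfalso
              obtain ⟨h1, h2⟩ := he
              have : p = ⟨k, i⟩ := by
                cases p; subst h1; simp at h2 ⊢; exact h2
              rw [this] at hp'
              have : z' k i = v := by rw [hz', Function.update_self, Function.update_self]
              rw [this] at hp'
              rcases hv with h | h
              · exact absurd h hp'.1
              · exact absurd h hp'.2
            · rw [hzval p.1 p.2 he] at hp'; exact hp'
        have hcard' : ((Finset.univ : Finset ((k : Fin n) × Fin (δ k))).filter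
            (fun p => z' p.1 p.2 ≠ lo p.1 ∧ z' p.1 p.2 ≠ hi p.1)).card ≤ N := by
          have h1 := Finset.card_le_card hsub
          have h3 : (⟨k, i⟩ : (k : Fin n) × Fin (δ k)) ∈ (Finset.univ.filter
            (fun p : (k : Fin n) × Fin (δ k) => z p.1 p.2 ≠ lo p.1 ∧ z p.1 p.2 ≠ hi p.1)) := by
            simp [hp.1, hp.2]
          have h4 := Finset.card_erase_of_mem h3
          omega
        apply ih z' hcard'
        intro k' i'
        by_cases h1 : k' = k
        · subst h1
          by_cases h2 : i' = i
          · subst h2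
            have : z' k' i' = v := by rw [hz', Function.update_self, Function.update_self]
            rw [this]
            rcases hv with h | h
            · rw [h]; exact ⟨le_refl _, (hlt k').le⟩
            · rw [h]; exact ⟨(hlt k').le, le_refl _⟩
          · have : z' k' i' = z k' i' := by
              rw [hz', Function.update_self, Function.update_of_ne h2]
            rw [this]; exact hz k' i'
        · have : z' k' i' = z k' i' := by rw [hz', Function.update_of_ne h1]
          rw [this]; exact hz k' i'
      have hH := hupd (hi k) (Or.inr rfl)
      have hL := hupd (lo k) (Or.inl rfl)
      calc c = θ * c + (1 - θ) * c := by ring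
        _ ≤ θ * Q (Function.update z k (Function.update (z k) i (hi k)))
            + (1 - θ) * Q (Function.update z k (Function.update (z k) i (lo k))) := by
            apply add_le_add
            · exact mul_le_mul_of_nonneg_left hH hθ0
            · exact mul_le_mul_of_nonneg_left hL hθ1
        _ = Q (Function.update z k (Function.update (z k) i (θ * hi k + (1 - θ) * lo k))) :=
            hkey.symm
        _ = Q z := by rw [← hcomb, ← hself]

lemma vertex_blockRel {n : ℕ} {δ : Fin n → ℕ} {lo hi : Fin n → ℝ}
    (hlt : ∀ j, lo j < hi j) (z : ∀ k, Fin (δ k) → ℝ)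
    (hz : ∀ k i, z k i = lo k ∨ z k i = hi k) :
    ∃ ℓ : ∀ k, Fin (δ k + 1), BlockRel δ z (vrep δ lo hi ℓ) := by
  classical
  refine ⟨fun k => ⟨((Finset.univ : Finset (Fin (δ k))).filter
      (fun i => z k i = hi k)).card, ?_⟩, fun k => ?_⟩
  · have := Finset.card_filter_le (Finset.univ : Finset (Fin (δ k))) (fun i => z k i = hi k)
    simp only [Finset.card_univ, Fintype.card_fin] at this
    omega
  · set m := ((Finset.univ : Finset (Fin (δ k))).filter (fun i => z k i = hi k)).card with hm
    have hmle : m ≤ δ k := by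
      have := Finset.card_filter_le (Finset.univ : Finset (Fin (δ k))) (fun i => z k i = hi k)
      simpa using this
    obtain ⟨π, hπ⟩ := exists_perm_iff_mem
      ((Finset.univ : Finset (Fin (δ k))).filter (fun i => z k i = hi k))
      ((Finset.univ : Finset (Fin (δ k))).filter (fun j : Fin (δ k) => (j : ℕ) < m))
      (by rw [card_filter_coe_lt hmle])
    refine ⟨π, fun i => ?_⟩
    show z k i = if ((π i : Fin (δ k)) : ℕ) < m then hi k else lo k
    rcases hz k i with h | h
    · have hni : i ∉ (Finset.univ : Finset (Fin (δ k))).filter (fun i => z k i = hi k) := by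
        simp only [Finset.mem_filter, Finset.mem_univ, true_and]
        rw [h]; intro hc; exact absurd hc.symm (ne_of_gt (hlt k))
      have : ¬ ((π i : Fin (δ k)) : ℕ) < m := by
        intro hc
        exact hni ((hπ i).mpr (by simp [hc]))
      rw [if_neg this, h]
    · have hmi : i ∈ (Finset.univ : Finset (Fin (δ k))).filter (fun i => z k i = hi k) := by
        simp [h]
      have := (hπ i).mp hmi
      simp only [Finset.mem_filter, Finset.mem_univ, true_and] at this
      rw [if_pos this, h]

lemma aLift_blockRel {n : ℕ} {δ : Fin n → ℕ} (w : Fin n → ℝ)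
    {z z' : ∀ k, Fin (δ k) → ℝ} (h : BlockRel δ z z') :
    aLift δ w z = aLift δ w z' := by
  unfold aLift
  apply Finset.sum_congr rfl
  intro k _
  obtain ⟨π, hπ⟩ := h k
  calc (∑ i : Fin (δ k), (w k / (δ k : ℝ)) * z k i)
      = ∑ i : Fin (δ k), (w k / (δ k : ℝ)) * z' k (π i) := by
        apply Finset.sum_congr rfl; intro i _; rw [hπ i]
    _ = ∑ i : Fin (δ k), (w k / (δ k : ℝ)) * z' k i :=
        Fintype.sum_equiv π (fun i => (w k / (δ k : ℝ)) * z' k (π i))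
          (fun i => (w k / (δ k : ℝ)) * z' k i) (fun i => rfl)

lemma aLift_diag {n : ℕ} {δ : Fin n → ℕ} (hδ : ∀ j, 1 ≤ δ j) (w : Fin n → ℝ)
    (x : Fin n → ℝ) : aLift δ w (fun j _ => x j) = dotp w x := by
  unfold aLift dotp
  apply Finset.sum_congr rfl
  intro k _
  rw [Finset.sum_const, Finset.card_univ, Fintype.card_fin, nsmul_eq_mul]
  have : (δ k : ℝ) ≠ 0 := by
    have := hδ k; positivity
  field_simp

lemma contDiff_mvpoly {n : ℕ} (F : MvPolynomial (Fin n) ℝ) :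
    ContDiff ℝ 1 (fun x : Fin n → ℝ => MvPolynomial.eval x F) := by
  induction F using MvPolynomial.induction_on with
  | C a => simpa using contDiff_const (c := a)
  | add p q hp hq => simpa using hp.add hq
  | mul_X p i hp =>
    simp only [MvPolynomial.eval_mul, MvPolynomial.eval_X]
    exact hp.mul ((contDiff_pi.mp contDiff_id) i)

end Helpers

/-- Invariance of a modified polytope via sensitivity: if for each `k ∈ K` the pair
`(t_k*, λ_k*)` is feasible for the facet-`k` LP of `P` (where `q_k` is the blossom of
`x ↦ −a_k·f(x)`), and `α ∈ ℝ^{m_K}` is such that `t_k* − λ_k*·α ≥ 0` for all `k`,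
the perturbed polytope `P_α = {x | ∀ k, a_k·x ≤ b_k + α_k}` is contained in `R` and
has all facets nonempty, then `P_α` is an invariant set of `ẋ = f(x)`. -/
theorem stmt_17 {n mK : ℕ} (δ : Fin n → ℕ) (hδ : ∀ j, 1 ≤ δ j)
    (lo hi : Fin n → ℝ) (hlt : ∀ j, lo j < hi j)
    (f : (Fin n → ℝ) → (Fin n → ℝ))
    (hfpoly : ∀ j : Fin n, ∃ F : MvPolynomial (Fin n) ℝ,
      ∀ x : Fin n → ℝ, f x j = MvPolynomial.eval x F)
    (a : Fin mK → Fin n → ℝ) (b : Fin mK → ℝ)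
    (hPR : ∀ x : Fin n → ℝ, (∀ k, dotp (a k) x ≤ b k) →
      ∀ j, x j ∈ Set.Icc (lo j) (hi j))
    (q : Fin mK → ((∀ j, Fin (δ j) → ℝ) → ℝ))
    (hqma : ∀ k, MultiAffineB δ (q k))
    (hqsym : ∀ k, ∀ z z' : ∀ j, Fin (δ j) → ℝ, BlockRel δ z z' → q k z = q k z')
    (hqdiag : ∀ k, ∀ x : Fin n → ℝ, q k (fun j _ => x j) = -(dotp (a k) (f x)))
    (tstar : Fin mK → ℝ) (lamstar : Fin mK → Fin mK → ℝ)
    (hlam : ∀ k i, i ≠ k → 0 ≤ lamstar k i)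
    (hfeasLP : ∀ k, ∀ ℓ : ∀ j, Fin (δ j + 1),
      tstar k ≤ q k (vrep δ lo hi ℓ)
          + ∑ i, lamstar k i * (aLift δ (a i) (vrep δ lo hi ℓ) - b i))
    (α : Fin mK → ℝ)
    (hα : ∀ k, 0 ≤ tstar k - ∑ i, lamstar k i * α i)
    (hPαR : ∀ x : Fin n → ℝ, (∀ k, dotp (a k) x ≤ b k + α k) →
      ∀ j, x j ∈ Set.Icc (lo j) (hi j))
    (hfacet : ∀ k, ∃ x : Fin n → ℝ,
      (∀ i, dotp (a i) x ≤ b i + α i) ∧ dotp (a k) x = b k + α k) :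
    ∀ x : ℝ → (Fin n → ℝ),
      (∀ t ∈ Set.Ici (0 : ℝ), HasDerivWithinAt x (f (x t)) (Set.Ici 0) t) →
      (∀ k, dotp (a k) (x 0) ≤ b k + α k) →
      ∀ t : ℝ, 0 ≤ t → ∀ k, dotp (a k) (x t) ≤ b k + α k := by
  classical
  intro x hx hx0 t ht k0
  haveI : Nonempty (Fin mK) := ⟨k0⟩
  set P : Set (Fin n → ℝ) := {y | ∀ k, dotp (a k) y ≤ b k + α k} with hPdef
  suffices hmem : x t ∈ P from hmem k0
  -- the key pointwise bound on the rectangle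
  have key : ∀ (k : Fin mK) (y : Fin n → ℝ), (∀ j, y j ∈ Set.Icc (lo j) (hi j)) →
      tstar k ≤ -(dotp (a k) (f y)) + ∑ i, lamstar k i * (dotp (a i) y - b i) := by
    intro k y hy
    have hQma : MultiAffineB δ
        (fun z => q k z + ∑ i, lamstar k i * (aLift δ (a i) z - b i)) := by
      intro k' i' z s t' θ
      simp only [aLift_update, hqma k k' i' z s t' θ]
      rw [Finset.sum_congr rfl (fun i _ =>
        show lamstar k i * (aLift δ (a i) z
              + (a i k' / (δ k' : ℝ)) * ((θ * s + (1 - θ) * t') - z k' i') - b i)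
            = θ * (lamstar k i * (aLift δ (a i) z
              + (a i k' / (δ k' : ℝ)) * (s - z k' i') - b i))
            + (1 - θ) * (lamstar k i * (aLift δ (a i) z
              + (a i k' / (δ k' : ℝ)) * (t' - z k' i') - b i)) from by ring)]
      rw [Finset.sum_add_distrib, ← Finset.mul_sum, ← Finset.mul_sum]
      ring
    have hvertQ : ∀ z : ∀ j, Fin (δ j) → ℝ, (∀ k' i', z k' i' = lo k' ∨ z k' i' = hi k') →
        tstar k ≤ q k z + ∑ i, lamstar k i * (aLift δ (a i) z - b i) := by
      intro z hzv
      obtain ⟨ℓ, hbr⟩ := vertex_blockRel hlt z hzv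
      rw [hqsym k z _ hbr,
        Finset.sum_congr rfl (fun i _ => by rw [aLift_blockRel (a i) hbr])]
      exact hfeasLP k ℓ
    have hbox := multiAffine_ge_on_box hlt hQma hvertQ (fun j _ => y j)
      (fun k' i' => hy k')
    rw [hqdiag k y] at hbox
    calc tstar k ≤ _ := hbox
      _ = -(dotp (a k) (f y)) + ∑ i, lamstar k i * (dotp (a i) y - b i) := by
        congr 1
        exact Finset.sum_congr rfl (fun i _ => by rw [aLift_diag hδ])
  -- on P, at an active facet the field points inwards
  have inward : ∀ p : Fin n → ℝ, (∀ i, dotp (a i) p ≤ b i + α i) →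
      ∀ k, dotp (a k) p = b k + α k → dotp (a k) (f p) ≤ 0 := by
    intro p hp k hk
    have h1 := key k p (hPαR p hp)
    have h2 : ∑ i, lamstar k i * (dotp (a i) p - b i)
        = (∑ i, lamstar k i * α i) + ∑ i, lamstar k i * (dotp (a i) p - b i - α i) := by
      rw [← Finset.sum_add_distrib]
      exact Finset.sum_congr rfl (fun i _ => by ring)
    have h3 : ∑ i, lamstar k i * (dotp (a i) p - b i - α i) ≤ 0 := by
      rw [Finset.sum_eq_sum_sdiff_singleton_add (Finset.mem_univ k)]
      have hzk : lamstar k k * (dotp (a k) p - b k - α k) = 0 := by rw [hk]; ring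
      rw [hzk, add_zero]
      apply Finset.sum_nonpos
      intro i hi
      have hik : i ≠ k := by simpa using (Finset.mem_sdiff.mp hi).2
      exact mul_nonpos_iff.mpr (Or.inl ⟨hlam k i hik, by have := hp i; linarith⟩)
    have h4 := hα k
    rw [h2] at h1
    linarith
  -- subtangentiality: small Euler steps from points of P stay in P
  have step : ∀ p ∈ P, ∃ h₀ > 0, ∀ h : ℝ, 0 ≤ h → h ≤ h₀ → p + h • f p ∈ P := by
    intro p hp
    have hdot : ∀ (k : Fin mK) (h : ℝ),
        dotp (a k) (p + h • f p) = dotp (a k) p + h * dotp (a k) (f p) := by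
      intro k h
      simp only [dotp, Pi.add_apply, Pi.smul_apply, smul_eq_mul]
      rw [Finset.mul_sum, ← Finset.sum_add_distrib]
      exact Finset.sum_congr rfl (fun i _ => by ring)
    have hk : ∀ k : Fin mK, ∃ h₀ > 0, ∀ h : ℝ, 0 ≤ h → h ≤ h₀ →
        dotp (a k) (p + h • f p) ≤ b k + α k := by
      intro k
      by_cases hb : dotp (a k) p = b k + α k
      · refine ⟨1, one_pos, fun h h0 _ => ?_⟩
        rw [hdot k h, hb]
        have := inward p hp k hb
        nlinarith
      · have hlt' : dotp (a k) p < b k + α k := lt_of_le_of_ne (hp k) hb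
        have hM : (0:ℝ) < |dotp (a k) (f p)| + 1 := by positivity
        refine ⟨(b k + α k - dotp (a k) p) / (|dotp (a k) (f p)| + 1),
          div_pos (by linarith) hM, fun h h0 h1 => ?_⟩
        rw [hdot k h]
        have hle1 : h * dotp (a k) (f p) ≤ h * (|dotp (a k) (f p)| + 1) := by
          apply mul_le_mul_of_nonneg_left _ h0
          have := le_abs_self (dotp (a k) (f p)); linarith
        have hle2 : h * (|dotp (a k) (f p)| + 1) ≤ b k + α k - dotp (a k) p := by
          rw [← le_div_iff₀ hM]; exact h1
        linarith
    choose h0 h0pos hstep using hk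
    refine ⟨Finset.univ.inf' Finset.univ_nonempty h0, ?_, ?_⟩
    · rw [gt_iff_lt, Finset.lt_inf'_iff]; exact fun k _ => h0pos k
    · intro h hh0 hh1 k
      exact hstep k h hh0 (le_trans hh1 (Finset.inf'_le _ (Finset.mem_univ k)))
  -- basic topological facts
  have hPclosed : IsClosed P := by
    have : P = ⋂ k, {y : Fin n → ℝ | dotp (a k) y ≤ b k + α k} := by
      ext y; simp [hPdef, Set.mem_iInter]
    rw [this]
    refine isClosed_iInter fun k => isClosed_le ?_ continuous_const
    exact continuous_finset_sum _ fun i _ => (continuous_const.mul (continuous_apply i))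
  have hPne : P.Nonempty := by
    obtain ⟨y, hy, -⟩ := hfacet k0
    exact ⟨y, hy⟩
  have hfC1 : ContDiff ℝ 1 f := by
    have hf_eq : f = fun y => fun j => MvPolynomial.eval y (Classical.choose (hfpoly j)) := by
      funext y j; exact Classical.choose_spec (hfpoly j) y
    rw [hf_eq]
    exact contDiff_pi.mpr fun j => contDiff_mvpoly _
  -- local forward invariance
  have loc : ∀ τ : ℝ, 0 ≤ τ → x τ ∈ P → ∃ η > 0, ∀ s ∈ Set.Icc τ (τ + η), x s ∈ P := by
    intro τ hτ0 hτP
    obtain ⟨L, U, hU, hLip⟩ := (hfC1.contDiffAt (x := x τ)).exists_lipschitzOnWith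
    obtain ⟨ρ, hρ, hball⟩ := Metric.nhds_basis_closedBall.mem_iff.mp hU
    have hcw : ContinuousWithinAt x (Set.Ici 0) τ := (hx τ hτ0).continuousWithinAt
    have hev : ∀ᶠ s in nhdsWithin τ (Set.Ici τ), x s ∈ Metric.closedBall (x τ) (ρ/2) := by
      have h1 : Metric.closedBall (x τ) (ρ/2) ∈ nhds (x τ) :=
        Metric.closedBall_mem_nhds _ (by positivity)
      exact (nhdsWithin_mono τ (Set.Ici_subset_Ici.mpr hτ0)) (hcw h1)
    obtain ⟨u, hu, hsub⟩ := mem_nhdsGE_iff_exists_Icc_subset.mp hev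
    set η := u - τ with hη
    have hηpos : 0 < η := by simp only [hη]; linarith [hu]
    refine ⟨η, hηpos, ?_⟩
    have hIcc : ∀ s ∈ Set.Icc τ (τ + η), x s ∈ Metric.closedBall (x τ) (ρ/2) := by
      intro s hs
      exact hsub ⟨hs.1, by have := hs.2; simp only [hη] at this ⊢; linarith⟩
    set D : ℝ → ℝ := fun s => Metric.infDist (x s) P with hD
    have hIccIci : Set.Icc τ (τ + η) ⊆ Set.Ici (0:ℝ) := fun s hs => le_trans hτ0 hs.1
    have hDcont : ContinuousOn D (Set.Icc τ (τ + η)) := by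
      apply (Metric.continuous_infDist_pt P).comp_continuousOn
      intro s hs
      exact ((hx s (hIccIci hs)).continuousWithinAt).mono hIccIci
    have main := le_gronwallBound_of_liminf_deriv_right_le (f := D)
      (f' := fun s => (L : ℝ) * D s) (δ := 0) (K := (L : ℝ)) (ε := 0)
      (a := τ) (b := τ + η) hDcont ?_ ?_ ?_
    · intro s hs
      have h1 := main s hs
      rw [gronwallBound_ε0_δ0] at h1
      have hD0 : D s = 0 := le_antisymm h1 Metric.infDist_nonneg
      exact (hPclosed.mem_iff_infDist_zero hPne).mpr hD0
    · -- the liminf slope condition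
      intro s hs r hr
      have hr' : (L : ℝ) * D s < r := hr
      have hs0 : (0:ℝ) ≤ s := le_trans hτ0 hs.1
      obtain ⟨p, hpP, hpd⟩ := hPclosed.exists_infDist_eq_dist hPne (x s)
      have hxsball : x s ∈ Metric.closedBall (x τ) (ρ/2) := hIcc s ⟨hs.1, le_of_lt hs.2⟩
      have hDs : D s = dist (x s) p := hpd
      have hDle : D s ≤ ρ/2 := by
        refine le_trans (Metric.infDist_le_dist_of_mem hτP) ?_
        simpa [Metric.mem_closedBall] using hxsball
      have hpball : p ∈ Metric.closedBall (x τ) ρ := by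
        rw [Metric.mem_closedBall]
        have h1 : dist p (x s) = D s := by rw [hDs, dist_comm]
        have h2 : dist (x s) (x τ) ≤ ρ/2 := by simpa [Metric.mem_closedBall] using hxsball
        calc dist p (x τ) ≤ dist p (x s) + dist (x s) (x τ) := dist_triangle _ _ _
          _ ≤ ρ/2 + ρ/2 := add_le_add (h1 ▸ hDle) h2
          _ = ρ := by ring
      have hxsU : x s ∈ U := hball (by
        refine Metric.closedBall_subset_closedBall ?_ hxsball; linarith)
      have hpU : p ∈ U := hball hpball
      have hLipd : dist (f (x s)) (f p) ≤ (L : ℝ) * dist (x s) p :=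
        hLip.dist_le_mul _ hxsU _ hpU
      obtain ⟨h₀, h₀pos, hsubtan⟩ := step p hpP
      have hε'pos : 0 < (r - (L : ℝ) * D s) / 2 := by linarith [hr']
      have hder : HasDerivWithinAt x (f (x s)) (Set.Ici 0) s := hx s hs0
      have hlo := hasDerivWithinAt_iff_isLittleO.mp hder
      have hbound := hlo.bound hε'pos
      have hmono : nhdsWithin s (Set.Ioi s) ≤ nhdsWithin s (Set.Ici 0) :=
        nhdsWithin_mono s (fun z hz => le_trans hs0 (le_of_lt hz))
      have hbound' : ∀ᶠ z in nhdsWithin s (Set.Ioi s),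
          ‖x z - x s - (z - s) • f (x s)‖ ≤ (r - (L : ℝ) * D s) / 2 * ‖z - s‖ :=
        hmono hbound
      have hIoo : Set.Ioo s (s + h₀) ∈ nhdsWithin s (Set.Ioi s) :=
        Ioo_mem_nhdsGT_of_mem ⟨le_refl s, by linarith⟩
      apply Filter.Eventually.frequently
      filter_upwards [hbound', hIoo] with z hz1 hz2
      have hhpos : 0 < z - s := sub_pos.mpr hz2.1
      have hhle : z - s ≤ h₀ := by linarith [hz2.2]
      have hmemP : p + (z - s) • f p ∈ P := hsubtan (z - s) hhpos.le hhle
      have hDz : D z ≤ dist (x z) (p + (z - s) • f p) := Metric.infDist_le_dist_of_mem hmemP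
      have hkey : dist (x z) (p + (z - s) • f p)
          ≤ (r - (L : ℝ) * D s) / 2 * (z - s) + D s + (z - s) * ((L : ℝ) * D s) := by
        have hsplit : x z - (p + (z - s) • f p)
            = (x z - x s - (z - s) • f (x s)) + (x s - p) + (z - s) • (f (x s) - f p) := by
          rw [smul_sub]; abel
        rw [dist_eq_norm, hsplit]
        have h1 : ‖x z - x s - (z - s) • f (x s)‖ ≤ (r - (L : ℝ) * D s) / 2 * (z - s) := by
          refine le_trans hz1 (le_of_eq ?_)
          rw [Real.norm_eq_abs, abs_of_pos hhpos]
        have h2 : ‖x s - p‖ = D s := by rw [← dist_eq_norm, ← hDs]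
        have h3 : ‖(z - s) • (f (x s) - f p)‖ ≤ (z - s) * ((L : ℝ) * D s) := by
          rw [norm_smul, Real.norm_eq_abs, abs_of_pos hhpos]
          apply mul_le_mul_of_nonneg_left _ hhpos.le
          calc ‖f (x s) - f p‖ = dist (f (x s)) (f p) := by rw [dist_eq_norm]
            _ ≤ (L : ℝ) * dist (x s) p := hLipd
            _ = (L : ℝ) * D s := by rw [hDs]
        calc ‖(x z - x s - (z - s) • f (x s)) + (x s - p) + (z - s) • (f (x s) - f p)‖
            ≤ ‖x z - x s - (z - s) • f (x s)‖ + ‖x s - p‖ + ‖(z - s) • (f (x s) - f p)‖ :=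
              norm_add₃_le
          _ ≤ (r - (L : ℝ) * D s) / 2 * (z - s) + D s + (z - s) * ((L : ℝ) * D s) := by
              rw [h2]; exact add_le_add (add_le_add h1 le_rfl) h3
      have hslope : (z - s)⁻¹ * (D z - D s) ≤ (r - (L : ℝ) * D s) / 2 + (L : ℝ) * D s := by
        rw [inv_mul_le_iff₀ hhpos]
        have : D z - D s ≤ (r - (L : ℝ) * D s) / 2 * (z - s) + (z - s) * ((L : ℝ) * D s) := by
          linarith [hDz.trans hkey]
        nlinarith
      calc (z - s)⁻¹ * (D z - D s) ≤ (r - (L : ℝ) * D s) / 2 + (L : ℝ) * D s := hslope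
        _ < r := by linarith [hr']
    · -- D τ ≤ 0
      show D τ ≤ 0
      simp only [hD]
      rw [Metric.infDist_zero_of_mem hτP]
    · -- bound
      intro s hs
      simp
  -- global argument via the first exit time
  by_contra hnot
  set A : Set ℝ := {s | 0 ≤ s ∧ x s ∉ P} with hA
  have hAne : A.Nonempty := ⟨t, ht, hnot⟩
  have hAbdd : BddBelow A := ⟨0, fun s hs => hs.1⟩
  set τ := sInf A with hτ
  have hτ0 : 0 ≤ τ := le_csInf hAne (fun s hs => hs.1)
  have hbefore : ∀ s, 0 ≤ s → s < τ → x s ∈ P := by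
    intro s hs0 hsτ
    by_contra hsP
    exact absurd (csInf_le hAbdd ⟨hs0, hsP⟩) (not_le.mpr hsτ)
  have hτP : x τ ∈ P := by
    rcases eq_or_lt_of_le hτ0 with h | h
    · rw [← h]; exact hx0
    · have hcw : ContinuousWithinAt x (Set.Ico 0 τ) τ :=
        ((hx τ hτ0).continuousWithinAt).mono Set.Ico_subset_Ici_self
      have hclos : τ ∈ closure (Set.Ico 0 τ) := by
        rw [closure_Ico (ne_of_lt h)]
        exact ⟨hτ0, le_refl τ⟩
      have himg := hcw.mem_closure_image hclos
      have hsubP : closure (x '' Set.Ico 0 τ) ⊆ P := by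
        apply closure_minimal ?_ hPclosed
        rintro y ⟨s, hs, rfl⟩
        exact hbefore s hs.1 hs.2
      exact hsubP himg
  obtain ⟨η, hηpos, hη⟩ := loc τ hτ0 hτP
  have hlb : ∀ s ∈ A, τ + η ≤ s := by
    intro s hsA
    by_contra hlt'
    push_neg at hlt'
    exact hsA.2 (hη s ⟨csInf_le hAbdd hsA, le_of_lt hlt'⟩)
  have : τ + η ≤ τ := le_csInf hAne hlb
  linarith
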